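/- Let V be a finite type and E : Fin m → Sym2 V a multigraph on V. Then for all natural numbers x and z, k^G_{x+z} · C(x + z, z) ≥ k^G_x · C(m − x, z), where k^G_x = C(m,x) − c^G_x. -/

import Mathlib

open scoped Classical


/-- `e` is a loop index at vertex `v`. -/
def IsLoopIdx {V : Type*} {m : ℕ} (E : Fin m → Sym2 V) (v : V) (e : Fin m) : Prop :=
  E e = Sym2.diag v

/-- `u` and `v` are connected in the multigraph `E` with the edge indices in `S` deleted. -/
def ConnectedMod {V : Type*} {m : ℕ} (E : Fin m → Sym2 V) (S : Finset (Fin m))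
    (u v : V) : Prop :=
  Relation.EqvGen (fun a b => ∃ e : Fin m, e ∉ S ∧ E e = s(a, b)) u v

/-- `G − S` is decodable: every vertex is connected in `G − S` to a vertex with a loop
outside `S`. -/
def DecodableMod {V : Type*} {m : ℕ} (E : Fin m → Sym2 V) (S : Finset (Fin m)) : Prop :=
  ∀ u : V, ∃ v : V, (∃ e : Fin m, e ∉ S ∧ IsLoopIdx E v e) ∧ ConnectedMod E S u v

def IsDecodable {V : Type*} {m : ℕ} (E : Fin m → Sym2 V) : Prop :=
  DecodableMod E ∅

/-- `c_x^G`: the number of `x`-element sets of edge indices whose deletion leaves a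
decodable graph. -/
noncomputable def cG {V : Type*} {m : ℕ} (E : Fin m → Sym2 V) (x : ℕ) : ℕ :=
  Set.ncard {S : Finset (Fin m) | S.card = x ∧ DecodableMod E S}

/-- `k_x^G = C(m,x) − c_x^G`. -/
noncomputable def kG {V : Type*} {m : ℕ} (E : Fin m → Sym2 V) (x : ℕ) : ℕ :=
  Nat.choose m x - cG E x

/-- `m(G)`: the minimum cardinality of a loop cut. -/
noncomputable def mCut {V : Type*} {m : ℕ} (E : Fin m → Sym2 V) : ℕ :=
  sInf {k : ℕ | ∃ S : Finset (Fin m), S.card = k ∧ ¬ DecodableMod E S}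

/-- incidence degree of `v` (a loop at `v` counts once). -/
noncomputable def dI {V : Type*} {m : ℕ} (E : Fin m → Sym2 V) (v : V) : ℕ :=
  Set.ncard {e : Fin m | v ∈ E e}

/-- `δ_I(G)`: the minimum incidence degree. -/
noncomputable def deltaI {V : Type*} {m : ℕ} (E : Fin m → Sym2 V) : ℕ :=
  sInf (Set.range (dI E))

/-- `L_G`: the number of loop indices. -/
noncomputable def LG {V : Type*} {m : ℕ} (E : Fin m → Sym2 V) : ℕ :=
  Set.ncard {e : Fin m | ∃ v : V, E e = Sym2.diag v}

/-- `δ_ℓ(v)`: the number of loop indices at `v`. -/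
noncomputable def loopsAt {V : Type*} {m : ℕ} (E : Fin m → Sym2 V) (v : V) : ℕ :=
  Set.ncard {e : Fin m | E e = Sym2.diag v}

/-- `Δ_ℓ(G)`: the maximum number of loops at a single vertex. -/
noncomputable def DeltaLoops {V : Type*} {m : ℕ} (E : Fin m → Sym2 V) : ℕ :=
  sSup (Set.range (loopsAt E))

/-- `κ_G`: the edge connectivity. -/
noncomputable def kappaG {V : Type*} {m : ℕ} (E : Fin m → Sym2 V) : ℕ :=
  sInf {k : ℕ | ∃ S : Finset (Fin m), S.card = k ∧ ∃ u v : V, ¬ ConnectedMod E S u v}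

lemma decodable_anti {V : Type*} {m : ℕ} (E : Fin m → Sym2 V) {S S' : Finset (Fin m)}
    (h : S ⊆ S') (hd : DecodableMod E S') : DecodableMod E S := by
  intro u
  obtain ⟨v, ⟨e, he, hl⟩, hc⟩ := hd u
  exact ⟨v, ⟨e, fun hx => he (h hx), hl⟩,
    Relation.EqvGen.mono (r := fun a b => ∃ e : Fin m, e ∉ S' ∧ E e = s(a, b))
      (p := fun a b => ∃ e : Fin m, e ∉ S ∧ E e = s(a, b))
      (fun a b ⟨e, he, hE⟩ => ⟨e, fun hx => he (h hx), hE⟩) u v hc⟩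

open Finset in
lemma kG_eq {V : Type*} [Fintype V] {m : ℕ} (E : Fin m → Sym2 V) (x : ℕ) :
    kG E x = ((univ.powersetCard x).filter (fun S : Finset (Fin m) => ¬ DecodableMod E S)).card := by
  have hc : cG E x = ((univ.powersetCard x).filter (fun S : Finset (Fin m) => DecodableMod E S)).card := by
    rw [cG, ← Set.ncard_coe_finset]
    congr 1
    ext S
    simp [Finset.mem_powersetCard_univ, and_comm]
  have htot : ((univ.powersetCard x).filter (fun S : Finset (Fin m) => DecodableMod E S)).card
      + ((univ.powersetCard x).filter (fun S : Finset (Fin m) => ¬ DecodableMod E S)).card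
      = Nat.choose m x := by
    rw [Finset.card_filter_add_card_filter_not, Finset.card_powersetCard]
    simp
  rw [kG, hc]
  omega

open Finset in
lemma supersets_card {m : ℕ} {S : Finset (Fin m)} {x z : ℕ} (hS : S.card = x) :
    ((univ.powersetCard (x + z)).filter (fun T => S ⊆ T)).card = Nat.choose (m - x) z := by
  have h := Finset.card_powersetCard z Sᶜ
  rw [Finset.card_compl, hS, Fintype.card_fin] at h
  rw [← h]
  apply Finset.card_bij' (fun T _ => T \ S) (fun U _ => U ∪ S)
  · intro T hT
    simp only [mem_filter, Finset.mem_powersetCard_univ] at hT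
    rw [Finset.mem_powersetCard]
    constructor
    · intro a ha
      simp only [Finset.mem_sdiff] at ha
      simp [Finset.mem_compl, ha.2]
    · rw [Finset.card_sdiff_of_subset hT.2, hT.1, hS]; omega
  · intro U hU
    rw [Finset.mem_powersetCard] at hU
    have hdisj : Disjoint U S := by
      rw [Finset.disjoint_left]
      intro a ha haS
      exact Finset.mem_compl.mp (hU.1 ha) haS
    simp only [mem_filter, Finset.mem_powersetCard_univ]
    constructor
    · rw [Finset.card_union_of_disjoint hdisj, hU.2, hS]; omega
    · exact Finset.subset_union_right
  · intro T hT
    simp only [mem_filter, Finset.mem_powersetCard_univ] at hT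
    exact Finset.sdiff_union_of_subset hT.2
  · intro U hU
    rw [Finset.mem_powersetCard] at hU
    have hdisj : Disjoint U S := by
      rw [Finset.disjoint_left]
      intro a ha haS
      exact Finset.mem_compl.mp (hU.1 ha) haS
    rw [Finset.union_sdiff_cancel_right hdisj]

theorem stmt14 {V : Type*} [Fintype V] {m : ℕ} (E : Fin m → Sym2 V) :
    ∀ x z : ℕ, kG E (x + z) * Nat.choose (x + z) z ≥ kG E x * Nat.choose (m - x) z := by
  intro x z
  set Bx := (Finset.univ.powersetCard x).filter (fun S : Finset (Fin m) => ¬ DecodableMod E S) with hBx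
  set Bxz := (Finset.univ.powersetCard (x + z)).filter
    (fun S : Finset (Fin m) => ¬ DecodableMod E S) with hBxz
  rw [kG_eq, kG_eq, ← hBx, ← hBxz]
  -- double counting
  have key : ∑ S ∈ Bx, (Bxz.filter (fun T => S ⊆ T)).card
      = ∑ T ∈ Bxz, (Bx.filter (fun S => S ⊆ T)).card := by
    simp only [Finset.card_filter]
    exact Finset.sum_comm
  have lower : ∀ S ∈ Bx, (Bxz.filter (fun T => S ⊆ T)).card = Nat.choose (m - x) z := by
    intro S hS
    simp only [hBx, Finset.mem_filter, Finset.mem_powersetCard_univ] at hS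
    rw [hBxz, Finset.filter_filter]
    have : ((Finset.univ.powersetCard (x + z)).filter
        (fun T : Finset (Fin m) => ¬ DecodableMod E T ∧ S ⊆ T))
        = (Finset.univ.powersetCard (x + z)).filter (fun T => S ⊆ T) := by
      apply Finset.filter_congr
      intro T _
      simp only [iff_iff_implies_and_implies]
      refine ⟨fun h => h.2, fun h => ⟨fun hd => hS.2 (decodable_anti E h hd), h⟩⟩
    rw [this, supersets_card hS.1]
  have upper : ∀ T ∈ Bxz, (Bx.filter (fun S => S ⊆ T)).card ≤ Nat.choose (x + z) z := by
    intro T hT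
    simp only [hBxz, Finset.mem_filter, Finset.mem_powersetCard_univ] at hT
    have hsub : Bx.filter (fun S => S ⊆ T) ⊆ T.powersetCard x := by
      intro S hS
      simp only [hBx, Finset.mem_filter, Finset.mem_powersetCard_univ] at hS
      rw [Finset.mem_powersetCard]
      exact ⟨hS.2, hS.1.1⟩
    calc (Bx.filter (fun S => S ⊆ T)).card ≤ (T.powersetCard x).card :=
          Finset.card_le_card hsub
      _ = Nat.choose (x + z) x := by rw [Finset.card_powersetCard, hT.1]
      _ = Nat.choose (x + z) z := by
          rw [← Nat.choose_symm (Nat.le_add_right x z)]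
          congr 1
          omega
  calc Bx.card * Nat.choose (m - x) z
      = ∑ S ∈ Bx, (Bxz.filter (fun T => S ⊆ T)).card := by
        rw [Finset.sum_congr rfl lower, Finset.sum_const, smul_eq_mul]
    _ = ∑ T ∈ Bxz, (Bx.filter (fun S => S ⊆ T)).card := key
    _ ≤ ∑ T ∈ Bxz, Nat.choose (x + z) z := Finset.sum_le_sum upper
    _ = Bxz.card * Nat.choose (x + z) z := by rw [Finset.sum_const, smul_eq_mul]
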